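/- Let G be a simple stochastic game with value function V, and let G' be the game obtained from G by removing, at every Minimizer state s, each action a ∈ Av(s) with V(s,a) > V(s) (at least one available action remains at each Minimizer state, and all other states are unchanged). Then the value function of G' equals V; that is, removing Minimizer's suboptimal actions does not change the value of any state. -/

import Mathlib

/-- A simple stochastic game (SG): a finite set of states `S` partitioned into
Maximizer states (`isMax s = true`) and Minimizer states (`isMax s = false`),
a target state, a sink state, a finite set of actions `A`, a nonempty set of
available actions at each state, and a transition function assigning to each
state and available action a probability distribution over states; the target
and the sink each have exactly one available action, a self-loop with
probability 1. -/
structure SG (S A : Type) [Fintype S] [DecidableEq S] [Fintype A] [DecidableEq A] where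
  isMax : S → Bool
  target : S
  sink : S
  target_ne_sink : target ≠ sink
  Av : S → Finset A
  Av_nonempty : ∀ s, (Av s).Nonempty
  δ : S → A → S → ℝ
  δ_nonneg : ∀ s a s', 0 ≤ δ s a s'
  δ_sum : ∀ s, ∀ a ∈ Av s, ∑ s', δ s a s' = 1
  target_loop : ∃ a, Av target = {a} ∧ δ target a target = 1
  sink_loop : ∃ a, Av sink = {a} ∧ δ sink a sink = 1

namespace SG

variable {S A : Type} [Fintype S] [DecidableEq S] [Fintype A] [DecidableEq A]

/-- `f(s,a) := Σ_{s'} δ(s,a)(s') · f(s')`. -/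
noncomputable def fval (G : SG S A) (f : S → ℝ) (s : S) (a : A) : ℝ :=
  ∑ s', G.δ s a s' * f s'

/-- `f : S → [0,1]`. -/
def InUnit (f : S → ℝ) : Prop := ∀ s, 0 ≤ f s ∧ f s ≤ 1

/-- The right-hand side of the Bellman equations at a (non-target, non-sink)
state `s`, with available actions given by `Av'`:
`max_{a ∈ Av'(s)} f(s,a)` at Maximizer states and `min_{a ∈ Av'(s)} f(s,a)`
at Minimizer states. -/
noncomputable def bellmanOn (G : SG S A) (Av' : S → Finset A) (f : S → ℝ) (s : S) : ℝ :=
  if G.isMax s then sSup (G.fval f s '' ↑(Av' s)) else sInf (G.fval f s '' ↑(Av' s))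

/-- `f : S → [0,1]` is a solution of the Bellman equations of the game with
available actions restricted to `Av'`. -/
def IsSolutionOn (G : SG S A) (Av' : S → Finset A) (f : S → ℝ) : Prop :=
  InUnit f ∧ f G.target = 1 ∧ f G.sink = 0 ∧
    ∀ s, s ≠ G.target → s ≠ G.sink → f s = G.bellmanOn Av' f s

/-- `f` is a solution of the Bellman equations of `G`. -/
def IsSolution (G : SG S A) (f : S → ℝ) : Prop := G.IsSolutionOn G.Av f

/-- `V` is the least solution of the Bellman equations of the game with
available actions restricted to `Av'` (the value function of that game). -/
def IsLeastSolutionOn (G : SG S A) (Av' : S → Finset A) (V : S → ℝ) : Prop :=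
  G.IsSolutionOn Av' V ∧ ∀ f, G.IsSolutionOn Av' f → ∀ s, V s ≤ f s

/-- `V` is the value function of `G`: the least solution of the Bellman
equations, in the pointwise order. -/
def IsValue (G : SG S A) (V : S → ℝ) : Prop := G.IsLeastSolutionOn G.Av V

/-- `U` is the greatest solution of the Bellman equations of `G`, in the
pointwise order. -/
def IsGreatestSolution (G : SG S A) (U : S → ℝ) : Prop :=
  G.IsSolution U ∧ ∀ f, G.IsSolution f → ∀ s, f s ≤ U s

/-- `(s,a)` exits `T`: some successor with positive probability is outside `T`. -/
def Exits (G : SG S A) (T : Finset S) (s : S) (a : A) : Prop :=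
  ∃ s', s' ∉ T ∧ 0 < G.δ s a s'

/-- `exit^max_f(T)`: the maximum of `f(s,a)` over Maximizer states `s ∈ T`
and available actions `a` with `(s,a)` exiting `T` (max ∅ = 0). -/
noncomputable def exitMax (G : SG S A) (f : S → ℝ) (T : Finset S) : ℝ :=
  sSup (insert (0:ℝ)
    {x : ℝ | ∃ s ∈ T, G.isMax s = true ∧ ∃ a ∈ G.Av s, G.Exits T s a ∧ x = G.fval f s a})

/-- `exit^min_f(T)`: the minimum of `f(s,a)` over Minimizer states `s ∈ T`
and available actions `a` with `(s,a)` exiting `T` (min ∅ = 1). -/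
noncomputable def exitMin (G : SG S A) (f : S → ℝ) (T : Finset S) : ℝ :=
  sInf (insert (1:ℝ)
    {x : ℝ | ∃ s ∈ T, G.isMax s = false ∧ ∃ a ∈ G.Av s, G.Exits T s a ∧ x = G.fval f s a})

/-- `T` is an end component of the game with available actions restricted to
`Av'`: `T` is nonempty and there is a nonempty set `B` of actions, each
available at some state of `T`, such that (1) every `a ∈ B ∩ Av'(s)` for
`s ∈ T` stays in `T`, and (2) every state of `T` can reach every other state
of `T` by a finite path staying in `T` and using only actions of `B`. -/
def IsECOn (G : SG S A) (Av' : S → Finset A) (T : Finset S) : Prop :=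
  T.Nonempty ∧ ∃ B : Finset A, B.Nonempty ∧
    (∀ a ∈ B, ∃ s ∈ T, a ∈ Av' s) ∧
    (∀ s ∈ T, ∀ a ∈ B ∩ Av' s, ∀ s', 0 < G.δ s a s' → s' ∈ T) ∧
    (∀ s ∈ T, ∀ s' ∈ T, Relation.ReflTransGen
      (fun x y => x ∈ T ∧ ∃ a ∈ B ∩ Av' x, 0 < G.δ x a y) s s')

/-- `T` is an end component (EC) of `G`. -/
def IsEC (G : SG S A) (T : Finset S) : Prop := G.IsECOn G.Av T

/-- `T` is a maximal end component (MEC) of the game with available actions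
restricted to `Av'`. -/
def IsMECOn (G : SG S A) (Av' : S → Finset A) (T : Finset S) : Prop :=
  G.IsECOn Av' T ∧ ∀ T', G.IsECOn Av' T' → T ⊆ T' → T = T'

/-- `T` is a maximal end component (MEC) of `G`. -/
def IsMEC (G : SG S A) (T : Finset S) : Prop := G.IsMECOn G.Av T

/-- The available actions of the game obtained from `G` by removing, at every
Minimizer state `s`, each action `a ∈ Av(s)` with `f(s,a) > f(s)`. -/
noncomputable def restrictAv (G : SG S A) (f : S → ℝ) (s : S) : Finset A :=
  if G.isMax s then G.Av s
  else (G.Av s).filter (fun a => ¬ f s < G.fval f s a)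

/-- `T` is a simple end component (SEC) of `G`, with respect to the value
function `V`: an EC with `V(s) = exit^max_V(T)` for all `s ∈ T`. -/
def IsSEC (G : SG S A) (V : S → ℝ) (T : Finset S) : Prop :=
  G.IsEC T ∧ ∀ s ∈ T, V s = G.exitMax V T

/-- `T` is a maximal simple end component (MSEC) of `G` with respect to `V`. -/
def IsMSEC (G : SG S A) (V : S → ℝ) (T : Finset S) : Prop :=
  G.IsSEC V T ∧ ∀ T', G.IsSEC V T' → T ⊆ T' → T = T'

/-- `DEFLATE(T,f)`: equal to `min(f(s), exit^max_f(T))` on `T` and to `f`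
outside `T`. -/
noncomputable def deflate (G : SG S A) (T : Finset S) (f : S → ℝ) (s : S) : ℝ :=
  if s ∈ T then min (f s) (G.exitMax f T) else f s

/-- The Bellman update: `1` at the target, `0` at the sink, and the Bellman
right-hand side elsewhere. -/
noncomputable def bellmanUpdate (G : SG S A) (f : S → ℝ) : S → ℝ :=
  fun s => if s = G.target then 1 else if s = G.sink then 0 else G.bellmanOn G.Av f s

/-- The lower sequence `L_n` of bounded value iteration: `L_0` is `0`
everywhere except `L_0(target) = 1`, and `L_{n+1}` is the Bellman update
of `L_n`. -/
noncomputable def Lseq (G : SG S A) : ℕ → S → ℝ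
  | 0 => fun s => if s = G.target then 1 else 0
  | n + 1 => G.bellmanUpdate (G.Lseq n)

end SG


namespace SG

variable {S A : Type} [Fintype S] [DecidableEq S] [Fintype A] [DecidableEq A]

lemma fval_mono (G : SG S A) {f g : S → ℝ} (h : ∀ s, f s ≤ g s) (s : S) (a : A) :
    G.fval f s a ≤ G.fval g s a := by
  unfold fval
  exact Finset.sum_le_sum fun s' _ => mul_le_mul_of_nonneg_left (h s') (G.δ_nonneg s a s')

lemma fval_nonneg (G : SG S A) {f : S → ℝ} (h : ∀ s, 0 ≤ f s) (s : S) (a : A) :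
    0 ≤ G.fval f s a :=
  Finset.sum_nonneg fun s' _ => mul_nonneg (G.δ_nonneg s a s') (h s')

lemma fval_le_one (G : SG S A) {f : S → ℝ} (h : ∀ s, f s ≤ 1) {s : S} {a : A}
    (ha : a ∈ G.Av s) : G.fval f s a ≤ 1 := by
  have h0 : G.fval f s a ≤ ∑ s', G.δ s a s' := by
    refine Finset.sum_le_sum fun s' _ => ?_
    nlinarith [G.δ_nonneg s a s', h s']
  rw [G.δ_sum s a ha] at h0; exact h0

lemma img_finite (G : SG S A) (f : S → ℝ) (s : S) (D : Finset A) :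
    (G.fval f s '' ↑D).Finite := D.finite_toSet.image _

lemma img_nonempty (G : SG S A) (f : S → ℝ) (s : S) {D : Finset A} (hD : D.Nonempty) :
    (G.fval f s '' ↑D).Nonempty := by
  obtain ⟨a, ha⟩ := hD
  exact ⟨G.fval f s a, a, ha, rfl⟩

lemma bellmanOn_mono (G : SG S A) (Av' : S → Finset A) {f g : S → ℝ}
    (h : ∀ s, f s ≤ g s) {s : S} (hD : (Av' s).Nonempty) :
    G.bellmanOn Av' f s ≤ G.bellmanOn Av' g s := by
  unfold bellmanOn
  split
  · refine csSup_le (G.img_nonempty f s hD) ?_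
    rintro x ⟨a, ha, rfl⟩
    exact le_trans (G.fval_mono h s a)
      (le_csSup (G.img_finite g s _).bddAbove ⟨a, ha, rfl⟩)
  · refine le_csInf (G.img_nonempty g s hD) ?_
    rintro x ⟨a, ha, rfl⟩
    exact le_trans (csInf_le (G.img_finite f s _).bddBelow ⟨a, ha, rfl⟩)
      (G.fval_mono h s a)

lemma bellmanOn_mem_unit (G : SG S A) (Av' : S → Finset A) {f : S → ℝ}
    (hf : InUnit f) {s : S} (hD : (Av' s).Nonempty) (hsub : Av' s ⊆ G.Av s) :
    0 ≤ G.bellmanOn Av' f s ∧ G.bellmanOn Av' f s ≤ 1 := by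
  obtain ⟨a0, ha0⟩ := hD
  have hmem : G.fval f s a0 ∈ G.fval f s '' ↑(Av' s) := ⟨a0, ha0, rfl⟩
  have h0 : ∀ a ∈ Av' s, 0 ≤ G.fval f s a := fun a _ =>
    G.fval_nonneg (fun s' => (hf s').1) s a
  have h1 : ∀ a ∈ Av' s, G.fval f s a ≤ 1 := fun a ha =>
    G.fval_le_one (fun s' => (hf s').2) (hsub ha)
  unfold bellmanOn
  split
  · constructor
    · exact le_trans (h0 a0 ha0) (le_csSup (G.img_finite f s _).bddAbove hmem)
    · refine csSup_le ⟨_, hmem⟩ ?_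
      rintro x ⟨a, ha, rfl⟩; exact h1 a ha
  · constructor
    · refine le_csInf ⟨_, hmem⟩ ?_
      rintro x ⟨a, ha, rfl⟩; exact h0 a ha
    · exact le_trans (csInf_le (G.img_finite f s _).bddBelow hmem) (h1 a0 ha0)

/-- Pre-fixed points of the Bellman update. -/
def Pre (G : SG S A) (f : S → ℝ) : Prop :=
  InUnit f ∧ f G.target = 1 ∧ f G.sink = 0 ∧
    ∀ s, s ≠ G.target → s ≠ G.sink → G.bellmanOn G.Av f s ≤ f s

/-- The least solution is below every pre-fixed point. -/
lemma value_le_pre (G : SG S A) {V h : S → ℝ} (hV : G.IsValue V) (hh : G.Pre h) :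
    ∀ s, V s ≤ h s := by
  classical
  -- g = pointwise inf of pre-fixed points
  set g : S → ℝ := fun s => sInf {x : ℝ | ∃ f, G.Pre f ∧ x = f s} with hg
  have hVpre : G.Pre V := by
    obtain ⟨⟨hu, ht, hz, hb⟩, _⟩ := hV
    exact ⟨hu, ht, hz, fun s h1 h2 => le_of_eq (hb s h1 h2).symm⟩
  have hne : ∀ s, ({x : ℝ | ∃ f, G.Pre f ∧ x = f s}).Nonempty :=
    fun s => ⟨V s, V, hVpre, rfl⟩
  have hbdd : ∀ s, BddBelow {x : ℝ | ∃ f, G.Pre f ∧ x = f s} := by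
    intro s; refine ⟨0, ?_⟩; rintro x ⟨f, hf, rfl⟩; exact (hf.1 s).1
  have hg_le : ∀ f, G.Pre f → ∀ s, g s ≤ f s := fun f hf s =>
    csInf_le (hbdd s) ⟨f, hf, rfl⟩
  have hg_ge : ∀ s (c : ℝ), (∀ f, G.Pre f → c ≤ f s) → c ≤ g s := by
    intro s c hc
    refine le_csInf (hne s) ?_
    rintro x ⟨f, hf, rfl⟩; exact hc f hf
  have hgu : InUnit g := by
    intro s
    exact ⟨hg_ge s 0 fun f hf => (hf.1 s).1,
      le_trans (hg_le V hVpre s) (hVpre.1 s).2⟩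
  have hgt : g G.target = 1 := by
    refine le_antisymm (by simpa [hVpre.2.1] using hg_le V hVpre G.target) ?_
    exact hg_ge _ 1 fun f hf => le_of_eq hf.2.1.symm
  have hgz : g G.sink = 0 := by
    refine le_antisymm (by simpa [hVpre.2.2.1] using hg_le V hVpre G.sink) (hgu G.sink).1
  have hgpre : G.Pre g := by
    refine ⟨hgu, hgt, hgz, fun s h1 h2 => ?_⟩
    refine hg_ge s _ fun f hf => ?_
    exact le_trans (G.bellmanOn_mono G.Av (hg_le f hf) (G.Av_nonempty s)) (hf.2.2.2 s h1 h2)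
  -- bellmanUpdate g is also a pre-fixed point
  have hΦle : ∀ s, G.bellmanUpdate g s ≤ g s := by
    intro s
    unfold bellmanUpdate
    split
    · next h1 => rw [h1, hgt]
    · split
      · next _ h2 => rw [h2, hgz]
      · next h1 h2 => exact hgpre.2.2.2 s h1 h2
  have hΦpre : G.Pre (G.bellmanUpdate g) := by
    refine ⟨?_, ?_, ?_, ?_⟩
    · intro s
      unfold bellmanUpdate
      split
      · norm_num
      · split
        · norm_num
        · exact G.bellmanOn_mem_unit G.Av hgu (G.Av_nonempty s) (le_refl _)
    · unfold bellmanUpdate; simp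
    · unfold bellmanUpdate; simp [G.target_ne_sink.symm]
    · intro s h1 h2
      have : G.bellmanOn G.Av (G.bellmanUpdate g) s ≤ G.bellmanOn G.Av g s :=
        G.bellmanOn_mono G.Av hΦle (G.Av_nonempty s)
      unfold bellmanUpdate
      rw [if_neg h1, if_neg h2]
      exact this
  have hgΦ : ∀ s, g s ≤ G.bellmanUpdate g s := fun s => hg_le _ hΦpre s
  -- g is a solution
  have hgsol : G.IsSolution g := by
    refine ⟨hgu, hgt, hgz, fun s h1 h2 => ?_⟩
    refine le_antisymm ?_ (hgpre.2.2.2 s h1 h2)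
    have := hgΦ s
    unfold bellmanUpdate at this
    rwa [if_neg h1, if_neg h2] at this
  intro s
  exact le_trans (hV.2 g hgsol s) (hg_le h hh s)

end SG

/-- Let `V` be the value function of `G` and let `G'` be the
game obtained from `G` by removing, at every Minimizer state `s`, each action
`a ∈ Av(s)` with `V(s,a) > V(s)`. Then the value function of `G'` (the least
solution of the Bellman equations of the restricted game) equals `V`:
removing Minimizer's suboptimal actions does not change the value of any
state. -/
theorem stmt13 {S A : Type} [Fintype S] [DecidableEq S] [Fintype A] [DecidableEq A]
    (G : SG S A) (V : S → ℝ) (hV : G.IsValue V) :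
    G.IsLeastSolutionOn (G.restrictAv V) V ∧
      ∀ V' : S → ℝ, G.IsLeastSolutionOn (G.restrictAv V) V' → V' = V := by

  classical
  obtain ⟨⟨hu, ht, hz, hb⟩, hleast⟩ := hV
  have hVs : ∀ s, s ≠ G.target → s ≠ G.sink → G.isMax s = false →
      V s = sInf (G.fval V s '' ↑(G.Av s)) := by
    intro s h1 h2 hmax
    have := hb s h1 h2
    unfold SG.bellmanOn at this
    simpa [hmax] using this
  -- key fact at minimizer states: the min is attained and the filter is nonempty
  have key : ∀ s, s ≠ G.target → s ≠ G.sink → G.isMax s = false →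
      ∃ a0 ∈ G.Av s, G.fval V s a0 = V s ∧
        a0 ∈ (G.Av s).filter (fun a => ¬ V s < G.fval V s a) := by
    intro s h1 h2 hmax
    have hmem : sInf (G.fval V s '' ↑(G.Av s)) ∈ G.fval V s '' ↑(G.Av s) :=
      (G.img_nonempty V s (G.Av_nonempty s)).csInf_mem (G.img_finite V s (G.Av s))
    obtain ⟨a0, ha0, ha0v⟩ := hmem
    rw [Finset.mem_coe] at ha0
    refine ⟨a0, ha0, by rw [ha0v, ← hVs s h1 h2 hmax], ?_⟩
    rw [Finset.mem_filter]
    exact ⟨ha0, by rw [ha0v, ← hVs s h1 h2 hmax]; exact lt_irrefl _⟩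
  -- V is a solution of the restricted game
  have hsolR : G.IsSolutionOn (G.restrictAv V) V := by
    refine ⟨hu, ht, hz, fun s h1 h2 => ?_⟩
    unfold SG.bellmanOn SG.restrictAv
    rcases hmax : G.isMax s with _ | _
    · -- minimizer state
      simp only [hmax, if_false, Bool.false_eq_true]
      obtain ⟨a0, ha0, ha0v, ha0f⟩ := key s h1 h2 hmax
      set D := (G.Av s).filter (fun a => ¬ V s < G.fval V s a) with hD
      have hDsub : D ⊆ G.Av s := Finset.filter_subset _ _
      refine le_antisymm ?_ ?_
      · refine le_csInf ⟨G.fval V s a0, a0, Finset.mem_coe.mpr ha0f, rfl⟩ ?_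
        rintro x ⟨a, ha, rfl⟩
        rw [hVs s h1 h2 hmax]
        exact csInf_le (G.img_finite V s (G.Av s)).bddBelow
          ⟨a, Finset.mem_coe.mpr (hDsub (Finset.mem_coe.mp ha)), rfl⟩
      · exact csInf_le (G.img_finite V s D).bddBelow
          ⟨a0, Finset.mem_coe.mpr ha0f, ha0v⟩
    · -- maximizer state
      have := hb s h1 h2
      unfold SG.bellmanOn at this
      simp only [hmax, if_true] at this ⊢
      simpa using this
  -- any solution of the restricted game is a pre-fixed point of the full game
  have hpreR : ∀ f, G.IsSolutionOn (G.restrictAv V) f → G.Pre f := by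
    intro f ⟨hfu, hft, hfz, hfb⟩
    refine ⟨hfu, hft, hfz, fun s h1 h2 => ?_⟩
    rw [hfb s h1 h2]
    unfold SG.bellmanOn SG.restrictAv
    rcases hmax : G.isMax s with _ | _
    · simp only [hmax, if_false, Bool.false_eq_true]
      obtain ⟨a0, ha0, _, ha0f⟩ := key s h1 h2 hmax
      refine csInf_le_csInf (G.img_finite f s (G.Av s)).bddBelow
        ⟨G.fval f s a0, a0, Finset.mem_coe.mpr ha0f, rfl⟩
        (Set.image_mono ?_)
      intro a ha
      rw [Finset.mem_coe] at ha ⊢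
      exact Finset.filter_subset _ _ ha
    · simp [hmax]
  have hVval : G.IsValue V := ⟨⟨hu, ht, hz, hb⟩, hleast⟩
  have hleastR : G.IsLeastSolutionOn (G.restrictAv V) V :=
    ⟨hsolR, fun f hf s => G.value_le_pre hVval (hpreR f hf) s⟩
  refine ⟨hleastR, fun V' hV' => ?_⟩
  funext s
  exact le_antisymm (hV'.2 V hsolR s) (hleastR.2 V' hV'.1 s)
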